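/- For every integer k > 2n, the element s_k/k of ℚ[z_1,…,z_n] lies in m³, the cube of the ideal m generated by e_1,…,e_n. -/

import Mathlib

open MvPolynomial Finset

lemma esymm_eq_zero_of_card_lt {n j : ℕ} (h : n < j) : esymm (Fin n) ℚ j = 0 := by
  rw [esymm, Finset.powersetCard_eq_empty.mpr (by simpa using h), Finset.sum_empty]

lemma esymm_mem {n j : ℕ} (h1 : 1 ≤ j) :
    esymm (Fin n) ℚ j ∈ Ideal.span (esymm (Fin n) ℚ '' Set.Icc 1 n) := by
  rcases le_or_gt j n with hj | hj
  · exact Ideal.subset_span ⟨j, ⟨h1, hj⟩, rfl⟩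
  · rw [esymm_eq_zero_of_card_lt hj]; exact Ideal.zero_mem _

lemma psum_mem_pow (n : ℕ) (c : ℕ) : ∀ k : ℕ, c * n < k →
    psum (Fin n) ℚ k ∈ (Ideal.span (esymm (Fin n) ℚ '' Set.Icc 1 n)) ^ (c + 1) := by
  induction c with
  | zero =>
    intro k hk
    rw [Nat.zero_mul] at hk
    -- strong induction on k for the base case
    induction k using Nat.strong_induction_on with
    | _ k ih =>
      rw [psum_eq_mul_esymm_sub_sum (Fin n) ℚ k hk]
      rw [pow_one]
      refine Ideal.sub_mem _ (Ideal.mul_mem_left _ _ (esymm_mem hk)) ?_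
      refine Ideal.sum_mem _ fun a ha => ?_
      simp only [Finset.mem_filter, Finset.mem_antidiagonal, Finset.HasAntidiagonal.mem_antidiagonal, Set.mem_Ioo] at ha
      have h2 : 0 < a.2 := by omega
      have h2' : a.2 < k := by omega
      exact Ideal.mul_mem_left _ _ (by simpa using ih a.2 h2' h2)

  | succ c ihc =>
    intro k hk
    rw [Nat.succ_mul] at hk
    have hk0 : 0 < k := by omega
    rw [psum_eq_mul_esymm_sub_sum (Fin n) ℚ k hk0]
    have hnk : n < k := by nlinarith
    refine Ideal.sub_mem _ ?_ ?_
    · rw [esymm_eq_zero_of_card_lt hnk, mul_zero]; exact Ideal.zero_mem _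
    · refine Ideal.sum_mem _ fun a ha => ?_
      simp only [Finset.mem_filter, Finset.mem_antidiagonal, Finset.HasAntidiagonal.mem_antidiagonal, Set.mem_Ioo] at ha
      rcases le_or_gt a.1 n with h1 | h1
      · have : c * n < a.2 := by omega
        have hm := ihc a.2 this
        have he : esymm (Fin n) ℚ a.1 ∈ Ideal.span (esymm (Fin n) ℚ '' Set.Icc 1 n) :=
          esymm_mem (by omega)
        have : esymm (Fin n) ℚ a.1 * psum (Fin n) ℚ a.2 ∈
            (Ideal.span (esymm (Fin n) ℚ '' Set.Icc 1 n)) ^ (c + 1 + 1) := by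
          rw [pow_succ']
          exact Ideal.mul_mem_mul he hm
        rw [mul_assoc]
        exact Ideal.mul_mem_left _ _ this
      · rw [esymm_eq_zero_of_card_lt h1, mul_zero, zero_mul]; exact Ideal.zero_mem _

open MvPolynomial in
/-- **Lemma.** In `ℚ[z_1,…,z_n]`, for every `k > 2n` the element `s_k / k` lies in `m³`,
where `s_k` is the `k`-th power sum and `m` is the ideal generated by the elementary
symmetric polynomials `e_1, …, e_n`. -/
theorem stmt_4 (n k : ℕ) (hk : 2 * n < k) :
    (k : ℚ)⁻¹ • psum (Fin n) ℚ k ∈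
      (Ideal.span (esymm (Fin n) ℚ '' Set.Icc 1 n)) ^ 3 := by
  have h := psum_mem_pow n 2 k hk
  rw [MvPolynomial.smul_eq_C_mul]
  exact Ideal.mul_mem_left _ _ h
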